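/- If f: ℝⁿ → ℝ is strongly convex with constant σ_f > 0 on a convex set U, and g = (g₁,...,g_p) are convex differentiable functions with Jacobian bounded in Frobenius norm by c_g on U, then the map x ↦ u(x) := argmin_{u ∈ U} [f(u) + ⟨x, g(u)⟩] is Lipschitz continuous on the nonnegative orthant ℝᵖ₊ with constant c_g/σ_f, i.e. ‖u(x) - u(x̄)‖ ≤ (c_g/σ_f)‖x - x̄‖ for all x, x̄ ≥ 0. -/

import Mathlib

open scoped RealInnerProductSpace

/-- the map `x ↦ u(x) = argmin_{u ∈ U} [f(u) + ⟨x, g(u)⟩]` is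
Lipschitz on the nonnegative orthant with constant `c_g / σ_f`. -/
theorem lagrangian_minimizer_lipschitz {n p : ℕ}
    (U : Set (EuclideanSpace ℝ (Fin n)))
    (hUconv : Convex ℝ U) (hUclosed : IsClosed U)
    (f : EuclideanSpace ℝ (Fin n) → ℝ)
    (gradf : EuclideanSpace ℝ (Fin n) → EuclideanSpace ℝ (Fin n))
    (g : EuclideanSpace ℝ (Fin n) → EuclideanSpace ℝ (Fin p))
    (Dg : EuclideanSpace ℝ (Fin n) → Fin p → EuclideanSpace ℝ (Fin n))
    (σf cg : ℝ) (hσf : 0 < σf) (hcg : 0 < cg)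
    -- f is differentiable with gradient gradf, and σf-strongly convex on U
    (hfdiff : ∀ v ∈ U, HasGradientAt f (gradf v) v)
    (hstrconv : ∀ u ∈ U, ∀ v ∈ U,
      f v + ⟪gradf v, u - v⟫ + σf / 2 * ‖u - v‖ ^ 2 ≤ f u)
    -- each gᵢ is differentiable with gradient Dg · i and convex on U
    (hgdiff : ∀ i : Fin p, ∀ v ∈ U, HasGradientAt (fun w => g w i) (Dg v i) v)
    (hgconv : ∀ i : Fin p, ∀ u ∈ U, ∀ v ∈ U,
      g v i + ⟪Dg v i, u - v⟫ ≤ g u i)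
    -- the Jacobian of g is bounded by cg in Frobenius norm on U
    (hjac : ∀ u ∈ U, Real.sqrt (∑ i, ‖Dg u i‖ ^ 2) ≤ cg)
    -- ux x is the minimizer of the Lagrangian L(·, x) over U
    (ux : EuclideanSpace ℝ (Fin p) → EuclideanSpace ℝ (Fin n))
    (hmem : ∀ x : EuclideanSpace ℝ (Fin p), (∀ i, 0 ≤ x i) → ux x ∈ U)
    (hmin : ∀ x : EuclideanSpace ℝ (Fin p), (∀ i, 0 ≤ x i) → ∀ u ∈ U,
      f (ux x) + ∑ i, x i * g (ux x) i ≤ f u + ∑ i, x i * g u i) :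
    ∀ x xbar : EuclideanSpace ℝ (Fin p), (∀ i, 0 ≤ x i) → (∀ i, 0 ≤ xbar i) →
      ‖ux x - ux xbar‖ ≤ cg / σf * ‖x - xbar‖ := by
  -- Lipschitz bound for g on U
  have glip : ∀ a ∈ U, ∀ b ∈ U, ‖g a - g b‖ ≤ cg * ‖a - b‖ := by
    intro a ha b hb
    set A : EuclideanSpace ℝ (Fin n) → (EuclideanSpace ℝ (Fin n) →L[ℝ] EuclideanSpace ℝ (Fin p)) :=
      fun w => (PiLp.continuousLinearEquiv 2 ℝ (fun _ : Fin p => ℝ)).symm.toContinuousLinearMap.comp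
        (ContinuousLinearMap.pi fun i => innerSL ℝ (Dg w i)) with hA
    have hderiv : ∀ w ∈ U, HasFDerivAt g (A w) w := by
      intro w hw
      have h1 : HasFDerivAt (fun v => (fun i => g v i))
          (ContinuousLinearMap.pi fun i => innerSL ℝ (Dg w i)) w := by
        apply hasFDerivAt_pi.2
        intro i
        exact (hgdiff i w hw).hasFDerivAt
      exact ((PiLp.continuousLinearEquiv 2 ℝ (fun _ : Fin p => ℝ)).symm.toContinuousLinearMap.hasFDerivAt.comp w h1)
    have hbound : ∀ w ∈ U, ‖A w‖ ≤ cg := by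
      intro w hw
      have hcg0 : 0 ≤ cg := le_trans (Real.sqrt_nonneg _) (hjac w hw)
      apply ContinuousLinearMap.opNorm_le_bound _ hcg0
      intro v
      have hval : A w v = (WithLp.toLp 2 (fun i => ⟪Dg w i, v⟫) : EuclideanSpace ℝ (Fin p)) := rfl
      rw [hval, EuclideanSpace.norm_eq]
      have h1 : ∑ i, ‖⟪Dg w i, v⟫‖ ^ 2 ≤ (∑ i, ‖Dg w i‖ ^ 2) * ‖v‖ ^ 2 := by
        rw [Finset.sum_mul]
        apply Finset.sum_le_sum
        intro i _
        have := abs_real_inner_le_norm (Dg w i) v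
        rw [Real.norm_eq_abs]
        nlinarith [abs_nonneg (⟪Dg w i, v⟫), norm_nonneg (Dg w i), norm_nonneg v]
      calc Real.sqrt (∑ i, ‖⟪Dg w i, v⟫‖ ^ 2) ≤ Real.sqrt ((∑ i, ‖Dg w i‖ ^ 2) * ‖v‖ ^ 2) :=
            Real.sqrt_le_sqrt h1
        _ = Real.sqrt (∑ i, ‖Dg w i‖ ^ 2) * ‖v‖ := by
            rw [Real.sqrt_mul (by positivity), Real.sqrt_sq (norm_nonneg v)]
        _ ≤ cg * ‖v‖ := by
            exact mul_le_mul_of_nonneg_right (hjac w hw) (norm_nonneg v)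
    exact Convex.norm_image_sub_le_of_norm_hasFDerivWithin_le
      (fun w hw => (hderiv w hw).hasFDerivWithinAt) hbound hUconv hb ha
  -- strong minimality of the Lagrangian minimizer
  have hkey : ∀ x : EuclideanSpace ℝ (Fin p), (∀ i, 0 ≤ x i) →
      ∀ u, u ∈ U → (∀ w ∈ U, f u + ∑ i, x i * g u i ≤ f w + ∑ i, x i * g w i) →
      ∀ w ∈ U, f u + ∑ i, x i * g u i + σf / 2 * ‖w - u‖ ^ 2
        ≤ f w + ∑ i, x i * g w i := by
    intro x hx u hu hminu w hw
    set Lg : EuclideanSpace ℝ (Fin n) → ℝ := fun v => f v + ∑ i, x i * g v i with hLg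
    have hfo : ∀ b ∈ U, ∀ a ∈ U,
        Lg b + ⟪gradf b + ∑ i, x i • Dg b i, a - b⟫ + σf / 2 * ‖a - b‖ ^ 2 ≤ Lg a := by
      intro b hb a ha
      have h1 := hstrconv a ha b hb
      have h2 : ∑ i, x i * (g b i + ⟪Dg b i, a - b⟫) ≤ ∑ i, x i * g a i := by
        apply Finset.sum_le_sum
        intro i _
        exact mul_le_mul_of_nonneg_left (hgconv i a ha b hb) (hx i)
      have h3 : ⟪gradf b + (∑ i, x i • Dg b i : EuclideanSpace ℝ (Fin n)), a - b⟫
          = ⟪gradf b, a - b⟫ + ∑ i, x i * ⟪Dg b i, a - b⟫ := by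
        rw [inner_add_left, sum_inner]
        simp [real_inner_smul_left, Finset.mul_sum, mul_assoc]
      rw [hLg]
      simp only [h3]
      have h4 : ∑ i, x i * (g b i + ⟪Dg b i, a - b⟫)
          = ∑ i, x i * g b i + ∑ i, x i * ⟪Dg b i, a - b⟫ := by
        rw [← Finset.sum_add_distrib]
        apply Finset.sum_congr rfl
        intro i _; ring
      rw [h4] at h2
      linarith
    have hstep : ∀ t ∈ Set.Ioo (0:ℝ) 1, Lg u + σf / 2 * (1 - t) * ‖w - u‖ ^ 2 ≤ Lg w := by
      rintro t ⟨ht0, ht1⟩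
      set z := u + t • (w - u) with hzdef
      have hz : z ∈ U := by
        have h := hUconv hu hw (by linarith : (0:ℝ) ≤ 1 - t) ht0.le (by ring)
        have : z = (1 - t) • u + t • w := by module
        rwa [this]
      have e1 : u - z = (-t) • (w - u) := by rw [hzdef]; module
      have e2 : w - z = (1 - t) • (w - u) := by rw [hzdef]; module
      have hA := hfo z hz u hu
      have hB := hfo z hz w hw
      rw [e1] at hA
      rw [e2] at hB
      set G := gradf z + ∑ i, x i • Dg z i with hG
      set C := ⟪G, w - u⟫ with hC
      set D := ‖w - u‖ ^ 2 with hD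
      have hDnn : 0 ≤ D := by positivity
      have r1 : ⟪G, (-t) • (w - u)⟫ = -t * C := by rw [real_inner_smul_right]
      have r2 : ⟪G, (1 - t) • (w - u)⟫ = (1 - t) * C := by rw [real_inner_smul_right]
      have r3 : ‖(-t) • (w - u)‖ ^ 2 = t ^ 2 * D := by
        rw [norm_smul, Real.norm_eq_abs, abs_neg, abs_of_pos ht0, hD]; ring
      have r4 : ‖(1 - t) • (w - u)‖ ^ 2 = (1 - t) ^ 2 * D := by
        rw [norm_smul, Real.norm_eq_abs, abs_of_pos (by linarith : (0:ℝ) < 1 - t), hD]; ring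
      rw [r1, r3] at hA
      rw [r2, r4] at hB
      have hmz : Lg u ≤ Lg z := hminu z hz
      clear hLg
      clear_value z G C D Lg
      have hC1 : t * (σf / 2 * t * D) ≤ t * C := by nlinarith only [hA, hmz]
      have hC2 : σf / 2 * t * D ≤ C := (mul_le_mul_iff_right₀ ht0).mp hC1
      nlinarith only [hB, hmz, hDnn, hC2, ht0, ht1, mul_le_mul_of_nonneg_left hC2 (by linarith : (0:ℝ) ≤ 1 - t)]
    have htend : Filter.Tendsto (fun t : ℝ => Lg u + σf / 2 * (1 - t) * ‖w - u‖ ^ 2)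
        (nhdsWithin 0 (Set.Ioi 0)) (nhds (Lg u + σf / 2 * ‖w - u‖ ^ 2)) := by
      have hc : Continuous fun t : ℝ => Lg u + σf / 2 * (1 - t) * ‖w - u‖ ^ 2 := by fun_prop
      have h2 := (hc.tendsto 0).mono_left (nhdsWithin_le_nhds (s := Set.Ioi (0:ℝ)))
      simpa using h2
    have hev : ∀ᶠ t in nhdsWithin (0:ℝ) (Set.Ioi 0),
        Lg u + σf / 2 * (1 - t) * ‖w - u‖ ^ 2 ≤ Lg w := by
      filter_upwards [Ioo_mem_nhdsGT_of_mem (Set.mem_Ico.mpr ⟨le_refl (0:ℝ), one_pos⟩)] with t ht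
      exact hstep t ht
    have hfin := le_of_tendsto htend hev
    have hLu : Lg u = f u + ∑ i, x i * g u i := rfl
    have hLw : Lg w = f w + ∑ i, x i * g w i := rfl
    linarith [hfin]
  intro x xbar hx hxbar
  set u := ux x with hudef
  set v := ux xbar with hvdef
  have hu : u ∈ U := hmem x hx
  have hv : v ∈ U := hmem xbar hxbar
  have k1 := hkey x hx u hu (hmin x hx) v hv
  have k2 := hkey xbar hxbar v hv (hmin xbar hxbar) u hu
  have hnrev : ‖v - u‖ = ‖u - v‖ := norm_sub_rev v u
  rw [hnrev] at k1
  have hsum : σf * ‖u - v‖ ^ 2 ≤ ∑ i, (x i - xbar i) * (g v i - g u i) := by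
    have e : ∑ i, (x i - xbar i) * (g v i - g u i)
        = ((∑ i, x i * g v i) - ∑ i, x i * g u i)
          + ((∑ i, xbar i * g u i) - ∑ i, xbar i * g v i) := by
      rw [← Finset.sum_sub_distrib, ← Finset.sum_sub_distrib, ← Finset.sum_add_distrib]
      apply Finset.sum_congr rfl
      intro i _; ring
    rw [e]
    linarith [k1, k2]
  have hinner : ∑ i, (x i - xbar i) * (g v i - g u i) = ⟪x - xbar, g v - g u⟫ := by
    rw [PiLp.inner_apply]
    apply Finset.sum_congr rfl
    intro i _
    simp [RCLike.inner_apply]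
    ring
  have hCS : ⟪x - xbar, g v - g u⟫ ≤ ‖x - xbar‖ * ‖g v - g u‖ := real_inner_le_norm _ _
  have hgl : ‖g v - g u‖ ≤ cg * ‖u - v‖ := by
    have := glip v hv u hu
    rwa [norm_sub_rev v u] at this
  have hchain : σf * ‖u - v‖ ^ 2 ≤ ‖x - xbar‖ * (cg * ‖u - v‖) := by
    calc σf * ‖u - v‖ ^ 2 ≤ ⟪x - xbar, g v - g u⟫ := by rw [← hinner]; exact hsum
      _ ≤ ‖x - xbar‖ * ‖g v - g u‖ := hCS
      _ ≤ ‖x - xbar‖ * (cg * ‖u - v‖) :=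
          mul_le_mul_of_nonneg_left hgl (norm_nonneg _)
  rcases eq_or_lt_of_le (norm_nonneg (u - v)) with h0 | h0
  · rw [← h0]
    positivity
  · rw [div_mul_eq_mul_div, le_div_iff₀ hσf]
    nlinarith [hchain, h0, norm_nonneg (x - xbar)]
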